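/- arXiv:1411.0331 — 3 statements merged into one kernel-verified Lean document; each statement's English description precedes it below -/
import Mathlib

section
/- Let k be a commutative ring and (A,m) an associative unital k-algebra. For a k-bilinear map m₁ : A × A → A, the k[ε]-module A[ε] = A ⊕ Aε (ε² = 0) with multiplication (a+bε)(a'+b'ε) = aa' + (ab' + ba' + m₁(a,a'))ε is an associative unital k[ε]-algebra with unit 1_A (i.e. (A[ε], m+m₁ε) is a first order deformation of A) if and only if m₁ is normalized, i.e. m₁(a,1) = 0 = m₁(1,a) for all a ∈ A, and m₁ is a Hochschild 2-cocycle, i.e. a·m₁(b,c) − m₁(ab,c) + m₁(a,bc) − m₁(a,b)·c = 0 for all a,b,c ∈ A. -/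
/-!
STATEMENT 1: Let `k` be a commutative ring and `(A, m)` an associative unital `k`-algebra.
For a `k`-bilinear map `m₁ : A × A → A`, the `k[ε]`-module `A[ε] = A ⊕ Aε` (with `ε² = 0`),
encoded here as `A × A`, with multiplication
`(a + bε)(a' + b'ε) = aa' + (ab' + ba' + m₁(a,a'))ε`
is an associative unital `k[ε]`-algebra with unit `1_A` (i.e. a first order deformation of `A`)
if and only if `m₁` is normalized and a Hochschild 2-cocycle.
-/

namespace Stmt1

variable {k A : Type*} [CommRing k] [Ring A] [Algebra k A]

/-- The multiplication of the first order deformation `A[ε] = A ⊕ Aε` associated to a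
`k`-bilinear map `m₁`, where `(a, b)` encodes `a + bε`. -/
def defMul (m₁ : A →ₗ[k] A →ₗ[k] A) (x y : A × A) : A × A :=
  (x.1 * y.1, x.1 * y.2 + x.2 * y.1 + m₁ x.1 y.1)

/-- `(A[ε], m + m₁ε)` is a first order deformation of `A` (i.e. the deformed multiplication is
associative and unital, with the same unit `1 = (1, 0)` as `A`) if and only if `m₁` is a
normalized Hochschild 2-cocycle. -/
theorem first_order_deformation_iff_normalized_cocycle (m₁ : A →ₗ[k] A →ₗ[k] A) :
    ((∀ x y z : A × A, defMul m₁ (defMul m₁ x y) z = defMul m₁ x (defMul m₁ y z)) ∧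
        (∀ x : A × A, defMul m₁ x (1, 0) = x ∧ defMul m₁ (1, 0) x = x)) ↔
      ((∀ a : A, m₁ a 1 = 0 ∧ m₁ 1 a = 0) ∧
        (∀ a b c : A, a * m₁ b c - m₁ (a * b) c + m₁ a (b * c) - m₁ a b * c = 0)) := by
  constructor
  · rintro ⟨hassoc, hunit⟩
    constructor
    · intro a
      have h1 := (hunit (a, 0)).1
      have h2 := (hunit (a, 0)).2
      simp [defMul, Prod.ext_iff] at h1 h2
      exact ⟨h1, h2⟩
    · intro a b c
      have h := hassoc (a, 0) (b, 0) (c, 0)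
      simp [defMul, Prod.ext_iff, mul_assoc] at h
      rw [show a * m₁ b c - m₁ (a * b) c + m₁ a (b * c) - m₁ a b * c
          = (a * m₁ b c + m₁ a (b * c)) - (m₁ a b * c + m₁ (a * b) c) by abel, ← h, sub_self]
  · rintro ⟨hnorm, hcoc⟩
    constructor
    · intro x y z
      have h := hcoc x.1 y.1 z.1
      simp [defMul, Prod.ext_iff, mul_assoc]
      rw [← sub_eq_zero]
      calc x.1 * (y.1 * z.2) + (x.1 * y.2 + x.2 * y.1 + (m₁ x.1) y.1) * z.1 + (m₁ (x.1 * y.1)) z.1 -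
          (x.1 * (y.1 * z.2 + y.2 * z.1 + (m₁ y.1) z.1) + x.2 * (y.1 * z.1) + (m₁ x.1) (y.1 * z.1))
          = -(x.1 * (m₁ y.1) z.1 - (m₁ (x.1 * y.1)) z.1 + (m₁ x.1) (y.1 * z.1) - (m₁ x.1) y.1 * z.1) := by
            noncomm_ring
        _ = 0 := by rw [h, neg_zero]
    · intro x
      simp [defMul, Prod.ext_iff, (hnorm x.1).1, (hnorm x.1).2]


end Stmt1
end

section
/- Let k be a commutative ring, U a small category and (F, f) a presheaf of k-modules on U. (1) For a family f₁ = (f₁^u)_{u:V→U} of k-linear maps f₁^u : F(U) → F(V), the data (F[ε], f + f₁ε), where F[ε](U) = F(U) ⊕ F(U)ε and restriction along u : V → U is f^u + f₁^u ε, is a presheaf of k[ε]-modules (a first order deformation of F) if and only if f₁ is reduced (f₁^{1_U} = 0 for all U) and d_simp(f₁) = 0, i.e. f₁^{uv} = f₁^v ∘ f^u + f^v ∘ f₁^u for all composable v : W → V, u : V → U. (2) For reduced 1-cocycles f₁, f₁' with deformations F̄, F̄' and a family g₁ = (g₁^U)_U of k-linear maps g₁^U : F(U) → F(U), the map g = 1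 + g₁ε (with component 1 + g₁^U ε on F[ε](U)) is an isomorphism of presheaves of k[ε]-modules F̄ → F̄' if and only if d_simp(g₁) = f₁ − f₁', i.e. g₁^V ∘ f^u − f^u ∘ g₁^U = f₁^u − f₁'^u for all u : V → U. -/
/-!
STATEMENT 8: Let `k` be a commutative ring, `U` a small category and `(F, f)` a presheaf of
`k`-modules on `U`.
(1) For a family `f₁ = (f₁^u)_{u : V → U}` of `k`-linear maps `f₁^u : F(U) → F(V)`, the data
`(F[ε], f + f₁ε)` — where `F[ε](U) = F(U) ⊕ F(U)ε` and restriction along `u : V → U` is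
`f^u + f₁^u ε` — is a presheaf of `k[ε]`-modules (a first order deformation of `F`) if and only
if `f₁` is reduced (`f₁^{1_U} = 0`) and `d_simp(f₁) = 0`, i.e.
`f₁^{uv} = f₁^v ∘ f^u + f^v ∘ f₁^u` for all composable `v : W → V`, `u : V → U`.
(2) For reduced 1-cocycles `f₁`, `f₁'` with deformations `F̄`, `F̄'` and a family
`g₁ = (g₁^U)_U` of `k`-linear maps, the map `g = 1 + g₁ε` is an isomorphism of presheaves of
`k[ε]`-modules `F̄ → F̄'` if and only if `d_simp(g₁) = f₁ − f₁'`.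

`F[ε](U)` is encoded as `F(U) × F(U)` (`(x, y)` encodes `x + yε`); the `k[ε]`-module structure
is the canonical one and the maps `f^u + f₁^u ε` and `1 + g₁^U ε` are automatically
`k[ε]`-linear, so being a presheaf of `k[ε]`-modules amounts to the functoriality conditions
stated below.
-/

namespace Stmt8

open CategoryTheory

universe w v u

variable {k : Type w} {U : Type u} [CommRing k] [Category.{v} U]

/-- A presheaf of `k`-modules on the category `U`: for `u : V ⟶ U` the restriction map is
`map u : obj U →ₗ[k] obj V`. -/
structure PreMod (k : Type w) (U : Type u) [CommRing k] [Category.{v} U] where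
  obj : U → Type w
  [acgObj : ∀ X, AddCommGroup (obj X)]
  [modObj : ∀ X, Module k (obj X)]
  map : ∀ {X Y : U}, (X ⟶ Y) → (obj Y →ₗ[k] obj X)
  map_id : ∀ X : U, map (𝟙 X) = LinearMap.id
  map_comp : ∀ {X Y Z : U} (f : X ⟶ Y) (g : Y ⟶ Z), map (f ≫ g) = (map f).comp (map g)

attribute [instance] PreMod.acgObj PreMod.modObj

variable (F : PreMod k U)

/-- The deformed restriction map `f^u + f₁^u ε : F[ε](U) → F[ε](V)`,
`(x, y) ↦ (f^u x, f₁^u x + f^u y)`. -/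
def defRes (f₁ : ∀ {X Y : U}, (X ⟶ Y) → (F.obj Y →ₗ[k] F.obj X)) {X Y : U} (u : X ⟶ Y)
    (x : F.obj Y × F.obj Y) : F.obj X × F.obj X :=
  (F.map u x.1, f₁ u x.1 + F.map u x.2)

/-- The map `1 + g₁^U ε : F[ε](U) → F[ε](U)`, `(x, y) ↦ (x, g₁^U x + y)`. -/
def defIso (g₁ : ∀ X : U, F.obj X →ₗ[k] F.obj X) (X : U) (x : F.obj X × F.obj X) :
    F.obj X × F.obj X :=
  (x.1, g₁ X x.1 + x.2)

theorem presheaf_deformations_and_equivalences :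
    -- (1): `(F[ε], f + f₁ε)` is a presheaf of `k[ε]`-modules iff `f₁` is a reduced simplicial
    -- 1-cocycle:
    (∀ f₁ : ∀ {X Y : U}, (X ⟶ Y) → (F.obj Y →ₗ[k] F.obj X),
      ((∀ (X : U) (x : F.obj X × F.obj X), defRes F f₁ (𝟙 X) x = x) ∧
        (∀ {X Y Z : U} (v : X ⟶ Y) (u : Y ⟶ Z) (x : F.obj Z × F.obj Z),
          defRes F f₁ (v ≫ u) x = defRes F f₁ v (defRes F f₁ u x))) ↔
      ((∀ X : U, f₁ (𝟙 X) = 0) ∧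
        (∀ {X Y Z : U} (v : X ⟶ Y) (u : Y ⟶ Z),
          f₁ (v ≫ u) = (f₁ v).comp (F.map u) + (F.map v).comp (f₁ u)))) ∧
    -- (2): `1 + g₁ε` is an isomorphism of presheaves of `k[ε]`-modules `F̄ → F̄'` iff
    -- `d_simp(g₁) = f₁ − f₁'`:
    (∀ (f₁ f₁' : ∀ {X Y : U}, (X ⟶ Y) → (F.obj Y →ₗ[k] F.obj X)),
      (∀ X : U, f₁ (𝟙 X) = 0) →
      (∀ {X Y Z : U} (v : X ⟶ Y) (u : Y ⟶ Z),
        f₁ (v ≫ u) = (f₁ v).comp (F.map u) + (F.map v).comp (f₁ u)) →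
      (∀ X : U, f₁' (𝟙 X) = 0) →
      (∀ {X Y Z : U} (v : X ⟶ Y) (u : Y ⟶ Z),
        f₁' (v ≫ u) = (f₁' v).comp (F.map u) + (F.map v).comp (f₁' u)) →
      ∀ g₁ : ∀ X : U, F.obj X →ₗ[k] F.obj X,
        ((∀ X : U, Function.Bijective (defIso F g₁ X)) ∧
          (∀ {X Y : U} (u : X ⟶ Y) (x : F.obj Y × F.obj Y),
            defIso F g₁ X (defRes F f₁ u x) = defRes F f₁' u (defIso F g₁ Y x))) ↔
        (∀ {X Y : U} (u : X ⟶ Y),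
          (F.map u).comp (g₁ Y) - (g₁ X).comp (F.map u) = f₁ u - f₁' u)) := by
  constructor
  · intro f₁
    constructor
    · rintro ⟨hid, hcomp⟩
      constructor
      · intro X
        ext x
        have := hid X (x, 0)
        simp [defRes, F.map_id] at this
        simpa using this
      · intro X Y Z v u
        ext x
        have := hcomp v u (x, 0)
        simp [defRes, F.map_comp] at this
        simpa [add_comm] using this
    · rintro ⟨hred, hcoc⟩
      constructor
      · intro X x
        simp [defRes, F.map_id, hred]
      · intro X Y Z v u x
        simp [defRes, F.map_comp, hcoc, add_assoc, add_comm, add_left_comm]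
  · intro f₁ f₁' _ _ _ _ g₁
    constructor
    · rintro ⟨_, hcomm⟩ X Y u
      ext x
      have := hcomm u (x, 0)
      simp [defIso, defRes] at this
      simp only [LinearMap.sub_apply, LinearMap.comp_apply]
      rw [sub_eq_sub_iff_add_eq_add, add_comm, add_comm (f₁ u x)]
      exact this.symm
    · intro h
      refine ⟨fun X => ?_, fun {X Y} u x => ?_⟩
      · refine ⟨fun a b hab => ?_, fun y => ⟨(y.1, -g₁ X y.1 + y.2), ?_⟩⟩
        · simp only [defIso, Prod.mk.injEq] at hab
          obtain ⟨h1, h2⟩ := hab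
          rw [h1] at h2
          exact Prod.ext h1 (add_left_cancel h2)
        · simp [defIso]
      · have := congrFun (congrArg DFunLike.coe (h u)) x.1
        simp only [LinearMap.sub_apply, LinearMap.comp_apply] at this
        simp only [defIso, defRes, map_add, Prod.mk.injEq, true_and]
        have h2 := sub_eq_sub_iff_add_eq_add.mp this
        calc g₁ X (F.map u x.1) + (f₁ u x.1 + F.map u x.2)
            = (f₁ u x.1 + g₁ X (F.map u x.1)) + F.map u x.2 := by abel
          _ = (F.map u (g₁ Y x.1) + f₁' u x.1) + F.map u x.2 := by rw [h2]
          _ = f₁' u x.1 + (F.map u (g₁ Y x.1) + F.map u x.2) := by abel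

end Stmt8
end

section
/- Let k be a commutative ring, U a small category and (A, m, f) a presheaf of commutative associative unital k-algebras on U. Let ((m₁, f₁), c₁) be a normalized reduced 2-cocycle of the Gerstenhaber–Schack complex of A, decomposed according to C̄'_GS(A) = C̄'_tGS(A) ⊕ C'_simp(A), with corresponding first order twisted deformation Ā = (A[ε], m + m₁ε, f + f₁ε, 1 + c₁ε). Then Ā has central twists: each twist element c̄^{u,v} = 1 + c₁^{u,v}ε is central in the k[ε]-algebra Ā(W) = (A(W)[ε], m^W + m₁^W ε) for every composable pair v : W → V, u : V → U. Consequently Ā has an underlying presheaf of k[ε]-algebras (A[ε], m + m₁ε, f + f₁ε), which is the first order presheaf deformation corresponding to the cocycle (m₁, f₁). -/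
/-!
STATEMENT 14: Let `k` be a commutative ring, `U` a small category and `(A, m, f)` a presheaf of
commutative associative unital `k`-algebras on `U`.  Let `((m₁, f₁), c₁)` be a normalized
reduced 2-cocycle of the Gerstenhaber–Schack complex of `A` (decomposed according to
`C̄'_GS(A) = C̄'_tGS(A) ⊕ C'_simp(A)`), with corresponding first order twisted deformation
`Ā = (A[ε], m + m₁ε, f + f₁ε, 1 + c₁ε)`.  Then `Ā` has central twists: each twist element
`c̄^{u,v} = 1 + c₁^{u,v}ε` is central in the `k[ε]`-algebra `Ā(W)` for every composable pair.
Consequently `Ā` has an underlying presheaf of `k[ε]`-algebras `(A[ε], m + m₁ε, f + f₁ε)`,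
which is the first order presheaf deformation corresponding to the cocycle `(m₁, f₁)`:
each `Ā(X)` is an associative unital `k[ε]`-algebra, the deformed restriction maps are unital
algebra morphisms and they compose functorially.

Conventions are as in Statement 12.
-/

namespace Stmt14

open CategoryTheory

universe w v u

variable {k : Type w} {U : Type u} [CommRing k] [Category.{v} U]

/-- A presheaf of associative unital `k`-algebras on the category `U`. -/
structure PreAlg (k : Type w) (U : Type u) [CommRing k] [Category.{v} U] where
  obj : U → Type w
  [ringObj : ∀ X, CommRing (obj X)]
  [algObj : ∀ X, Algebra k (obj X)]
  map : ∀ {X Y : U}, (X ⟶ Y) → (obj Y →ₐ[k] obj X)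
  map_id : ∀ X : U, map (𝟙 X) = AlgHom.id k (obj X)
  map_comp : ∀ {X Y Z : U} (f : X ⟶ Y) (g : Y ⟶ Z), map (f ≫ g) = (map f).comp (map g)

attribute [instance] PreAlg.ringObj PreAlg.algObj

variable (A : PreAlg k U)

/-- The deformed multiplication `m^X + m₁^X ε` on `A(X)[ε] = A(X) × A(X)`. -/
def dMul (m₁ : ∀ X : U, A.obj X →ₗ[k] A.obj X →ₗ[k] A.obj X) (X : U)
    (x y : A.obj X × A.obj X) : A.obj X × A.obj X :=
  (x.1 * y.1, x.1 * y.2 + x.2 * y.1 + m₁ X x.1 y.1)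

/-- The deformed restriction map `f^u + f₁^u ε : A(Y)[ε] → A(X)[ε]` for `u : X ⟶ Y`. -/
def dRes (f₁ : ∀ {X Y : U}, (X ⟶ Y) → (A.obj Y →ₗ[k] A.obj X)) {X Y : U} (u : X ⟶ Y)
    (x : A.obj Y × A.obj Y) : A.obj X × A.obj X :=
  (A.map u x.1, f₁ u x.1 + A.map u x.2)

/-- The deformed twist `c̄^{u,v} = 1 + c₁^{u,v} ε ∈ A(X)[ε]` for `v : X ⟶ Y`, `u : Y ⟶ Z`. -/
def dTwist (c₁ : ∀ {X Y Z : U}, (X ⟶ Y) → (Y ⟶ Z) → A.obj X) {X Y Z : U}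
    (v : X ⟶ Y) (u : Y ⟶ Z) : A.obj X × A.obj X :=
  (1, c₁ v u)

theorem central_twists_and_underlying_presheaf
    (m₁ : ∀ X : U, A.obj X →ₗ[k] A.obj X →ₗ[k] A.obj X)
    (f₁ : ∀ {X Y : U}, (X ⟶ Y) → (A.obj Y →ₗ[k] A.obj X))
    (c₁ : ∀ {X Y Z : U}, (X ⟶ Y) → (Y ⟶ Z) → A.obj X)
    -- `((m₁, f₁), c₁)` is a normalized reduced GS 2-cocycle:
    (hnorm_m : ∀ (X : U) (a : A.obj X), m₁ X a 1 = 0 ∧ m₁ X 1 a = 0)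
    (hnorm_f : ∀ {X Y : U} (u : X ⟶ Y), f₁ u 1 = 0)
    (hred_f : ∀ X : U, f₁ (𝟙 X) = 0)
    (hred_c₁ : ∀ {Y Z : U} (u : Y ⟶ Z), c₁ (𝟙 Y) u = 0)
    (hred_c₂ : ∀ {Y Z : U} (u : Y ⟶ Z), c₁ u (𝟙 Z) = 0)
    (hHoch_m : ∀ (X : U) (a b c : A.obj X),
      a * m₁ X b c - m₁ X (a * b) c + m₁ X a (b * c) - m₁ X a b * c = 0)
    (h11 : ∀ {X Y : U} (u : X ⟶ Y) (a b : A.obj Y),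
      -(A.map u (m₁ Y a b) - m₁ X (A.map u a) (A.map u b))
        + (A.map u a * f₁ u b - f₁ u (a * b) + f₁ u a * A.map u b) = 0)
    (h21 : ∀ {X Y Z : U} (v : X ⟶ Y) (u : Y ⟶ Z) (a : A.obj Z),
      -(A.map v (f₁ u a) - f₁ (v ≫ u) a + f₁ v (A.map u a))
        + (A.map v (A.map u a) * c₁ v u - c₁ v u * A.map v (A.map u a)) = 0)
    (h30 : ∀ {W X Y Z : U} (w : W ⟶ X) (v : X ⟶ Y) (u : Y ⟶ Z),
      -(A.map w (c₁ v u) - c₁ (w ≫ v) u + c₁ w (v ≫ u) - c₁ w v) = 0) :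
    -- `Ā` has central twists:
    (∀ {X Y Z : U} (v : X ⟶ Y) (u : Y ⟶ Z) (x : A.obj X × A.obj X),
      dMul A m₁ X (dTwist A c₁ v u) x = dMul A m₁ X x (dTwist A c₁ v u)) ∧
    -- the underlying data `(A[ε], m + m₁ε, f + f₁ε)` is a first order presheaf deformation
    -- of `A`, corresponding to the cocycle `(m₁, f₁)`:
    ((∀ (X : U) (x y z : A.obj X × A.obj X),
        dMul A m₁ X (dMul A m₁ X x y) z = dMul A m₁ X x (dMul A m₁ X y z)) ∧
      (∀ (X : U) (x : A.obj X × A.obj X),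
        dMul A m₁ X x (1, 0) = x ∧ dMul A m₁ X (1, 0) x = x) ∧
      (∀ {X Y : U} (u : X ⟶ Y) (x y : A.obj Y × A.obj Y),
        dRes A f₁ u (dMul A m₁ Y x y) = dMul A m₁ X (dRes A f₁ u x) (dRes A f₁ u y)) ∧
      (∀ {X Y : U} (u : X ⟶ Y), dRes A f₁ u ((1 : A.obj Y), (0 : A.obj Y)) = (1, 0)) ∧
      (∀ (X : U) (x : A.obj X × A.obj X), dRes A f₁ (𝟙 X) x = x) ∧
      (∀ {X Y Z : U} (v : X ⟶ Y) (u : Y ⟶ Z) (x : A.obj Z × A.obj Z),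
        dRes A f₁ (v ≫ u) x = dRes A f₁ v (dRes A f₁ u x))) := by
  refine ⟨?_, ?_, ?_, ?_, ?_, ?_, ?_⟩
  · intro X Y Z v u x
    simp only [dMul, dTwist, (hnorm_m X x.1).1, (hnorm_m X x.1).2]
    refine Prod.ext (by ring) (by ring)
  · intro X x y z
    simp only [dMul]
    refine Prod.ext (by ring) ?_
    have h := hHoch_m X x.1 y.1 z.1
    simp only [map_mul, map_add, LinearMap.add_apply, LinearMap.map_add]
    have : m₁ X (x.1 * y.1) z.1 = x.1 * m₁ X y.1 z.1 + m₁ X x.1 (y.1 * z.1)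
        - m₁ X x.1 y.1 * z.1 := by linear_combination -h
    rw [this]; ring
  · intro X x
    constructor <;>
      · simp only [dMul, (hnorm_m X x.1).1, (hnorm_m X x.1).2]
        refine Prod.ext (by ring) (by ring)
  · intro X Y u x y
    simp only [dMul, dRes]
    refine Prod.ext (by simp) ?_
    have h := h11 u x.1 y.1
    simp only [map_mul, map_add, LinearMap.map_add]
    have : f₁ u (x.1 * y.1) = -A.map u (m₁ Y x.1 y.1) + m₁ X (A.map u x.1) (A.map u y.1)
        + A.map u x.1 * f₁ u y.1 + f₁ u x.1 * A.map u y.1 := by linear_combination -h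
    rw [this]; ring
  · intro X Y u
    simp [dRes, hnorm_f u]
  · intro X x
    simp [dRes, hred_f X, A.map_id]
  · intro X Y Z v u x
    simp only [dRes, A.map_comp, AlgHom.comp_apply]
    refine Prod.ext rfl ?_
    have h := h21 v u x.1
    have : f₁ (v ≫ u) x.1 = A.map v (f₁ u x.1) + f₁ v (A.map u x.1) := by
      have hc : A.map v (A.map u x.1) * c₁ v u - c₁ v u * A.map v (A.map u x.1) = 0 := by
        ring
      linear_combination h - hc
    rw [this, map_add]; ring

end Stmt14
end
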